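/- For every positive integer d, the polynomial h_d(t) = \sum_{i \ge 0} \binom{d-i-1}{i} t^i has only real roots. -/

import Mathlib

open Polynomial

private lemma pascal' (n j : ℕ) (hj : 1 ≤ j) :
    (n + 2 - j).choose j = (n + 1 - j).choose j + (n + 1 - j).choose (j - 1) := by
  obtain ⟨k, rfl⟩ : ∃ k, j = k + 1 := ⟨j - 1, by omega⟩
  rw [Nat.add_sub_cancel]
  rcases le_or_gt (k + 1) (n + 1) with h | h
  · have h1 : n + 2 - (k + 1) = (n + 1 - (k + 1)) + 1 := by omega
    rw [h1, Nat.choose_succ_succ]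
    simp only [Nat.succ_eq_add_one]
    omega
  · have hk : 1 ≤ k := by omega
    have h1 : n + 2 - (k + 1) = 0 := by omega
    have h2 : n + 1 - (k + 1) = 0 := by omega
    have c1 : Nat.choose 0 (k + 1) = 0 := Nat.choose_eq_zero_of_lt (by omega)
    have c2 : Nat.choose 0 k = 0 := Nat.choose_eq_zero_of_lt hk
    rw [h1, h2, c1, c2]

private noncomputable def S (z : ℂ) (n : ℕ) : ℂ :=
  ∑ i ∈ Finset.range (n + 1), ((n - i).choose i : ℂ) * z ^ i

private lemma Srec (z : ℂ) (n : ℕ) : S z (n + 2) = S z (n + 1) + z * S z n := by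
  unfold S
  rw [Finset.sum_range_succ' (fun i => ((n + 2 - i).choose i : ℂ) * z ^ i) (n + 2)]
  rw [Finset.sum_range_succ' (fun i => ((n + 1 - i).choose i : ℂ) * z ^ i) (n + 1)]
  rw [Finset.mul_sum]
  have e1 : ∀ i ∈ Finset.range (n + 2),
      ((n + 2 - (i + 1)).choose (i + 1) : ℂ) * z ^ (i + 1)
        = ((n - i).choose (i + 1) : ℂ) * z ^ (i + 1)
          + ((n - i).choose i : ℂ) * z ^ (i + 1) := by
    intro i _
    have hp := pascal' n (i + 1) (by omega)
    have h2 : n + 1 - (i + 1) = n - i := by omega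
    have h3 : i + 1 - 1 = i := by omega
    rw [h2, h3] at hp
    rw [hp]
    push_cast
    ring
  rw [Finset.sum_congr rfl e1, Finset.sum_add_distrib]
  have e2 : ∀ i ∈ Finset.range (n + 1),
      ((n + 1 - (i + 1)).choose (i + 1) : ℂ) * z ^ (i + 1)
        = ((n - i).choose (i + 1) : ℂ) * z ^ (i + 1) := by
    intro i _
    have h2 : n + 1 - (i + 1) = n - i := by omega
    rw [h2]
  rw [Finset.sum_congr rfl e2]
  have e3 : ∀ i ∈ Finset.range (n + 1),
      z * (((n - i).choose i : ℂ) * z ^ i) = ((n - i).choose i : ℂ) * z ^ (i + 1) := by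
    intro i _; ring
  rw [Finset.sum_congr rfl e3]
  rw [Finset.sum_range_succ (fun i => ((n - i).choose (i + 1) : ℂ) * z ^ (i + 1)) (n + 1)]
  rw [Finset.sum_range_succ (fun i => ((n - i).choose i : ℂ) * z ^ (i + 1)) (n + 1)]
  have z1 : ((n - (n + 1)).choose (n + 2) : ℂ) = 0 := by
    rw [Nat.choose_eq_zero_of_lt (by omega)]; simp
  have z2 : ((n - (n + 1)).choose (n + 1) : ℂ) = 0 := by
    rw [Nat.choose_eq_zero_of_lt (by omega)]; simp
  rw [z1, z2]
  simp
  ring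

private lemma key (α β : ℂ) (h1 : α + β = 1) (n : ℕ) :
    (α - β) * S (-(α * β)) n = α ^ (n + 1) - β ^ (n + 1) := by
  induction n using Nat.twoStepInduction with
  | zero => simp [S]
  | one =>
      have : S (-(α * β)) 1 = 1 := by
        simp [S, Finset.sum_range_succ]
      rw [this]
      linear_combination (β - α) * h1
  | more n ih1 ih2 =>
      rw [Srec, mul_add, ih2]
      have hmul : (α - β) * (-(α * β) * S (-(α * β)) n) = -(α * β) * (α ^ (n + 1) - β ^ (n + 1)) := by
        rw [← ih1]; ring
      rw [hmul]
      linear_combination (β ^ (n + 2) - α ^ (n + 2)) * h1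

/-- For every positive integer `d`, the polynomial
`h_d(t) = ∑_{i ≥ 0} C(d-i-1, i) t^i` has only real roots. -/
theorem h_d_real_rooted (d : ℕ) (hd : 0 < d) (z : ℂ)
    (hz : Polynomial.eval z (∑ i ∈ Finset.range (d + 1),
      Polynomial.C (((d - i - 1).choose i : ℂ)) * Polynomial.X ^ i) = 0) :
    z.im = 0 := by
  -- turn hz into S z (d-1) = 0
  have hz' : ∑ i ∈ Finset.range (d + 1), ((d - i - 1).choose i : ℂ) * z ^ i = 0 := by
    simpa [eval_finset_sum] using hz
  have hS : S z (d - 1) = 0 := by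
    have hrange : d - 1 + 1 = d := by omega
    have : S z (d - 1) = ∑ i ∈ Finset.range d, ((d - 1 - i).choose i : ℂ) * z ^ i := by
      unfold S; rw [hrange]
    rw [this]
    rw [Finset.sum_range_succ] at hz'
    have hlast : ((d - d - 1).choose d : ℂ) = 0 := by
      rw [Nat.choose_eq_zero_of_lt (by omega)]; simp
    rw [hlast, zero_mul, add_zero] at hz'
    rw [← hz']
    apply Finset.sum_congr rfl
    intro i _
    congr 3
    omega
  obtain ⟨w, hw⟩ := IsAlgClosed.exists_pow_nat_eq (k := ℂ) (1 + 4 * z) (n := 2) (by norm_num)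
  set α : ℂ := (1 + w) / 2 with hα
  set β : ℂ := (1 - w) / 2 with hβ
  have hsum : α + β = 1 := by rw [hα, hβ]; ring
  have hprod : -(α * β) = z := by
    rw [hα, hβ]
    field_simp
    linear_combination hw
  by_cases hw0 : w = 0
  · have : z = -(1 / 4) := by
      rw [hw0] at hw
      have : (1 : ℂ) + 4 * z = 0 := by rw [← hw]; ring
      linear_combination this / 4
    rw [this]
    norm_num
  · have hkey := key α β hsum (d - 1)
    rw [hprod, hS, mul_zero] at hkey
    have hrange : d - 1 + 1 = d := by omega
    rw [hrange] at hkey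
    have hpow : α ^ d = β ^ d := by
      have := hkey.symm
      linear_combination this
    have habs : ‖α‖ = ‖β‖ := by
      have h1 : ‖α‖ ^ d = ‖β‖ ^ d := by
        rw [← norm_pow, ← norm_pow, hpow]
      exact (pow_left_inj₀ (norm_nonneg α) (norm_nonneg β) hd.ne').mp h1
    have hnormSq : Complex.normSq α = Complex.normSq β := by
      rw [← Complex.sq_norm, ← Complex.sq_norm, habs]
    have hβα : β = 1 - α := by linear_combination hsum
    have hre : α.re = 1 / 2 := by
      rw [hβα] at hnormSq
      simp only [Complex.normSq_apply, Complex.sub_re, Complex.sub_im, Complex.one_re,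
        Complex.one_im] at hnormSq
      nlinarith [hnormSq]
    have hconj : (starRingEnd ℂ) α = β := by
      apply Complex.ext
      · simp [Complex.conj_re, hβα, Complex.sub_re, hre]
        norm_num [hre]
      · simp [hβα, Complex.sub_im]
    have : z = -(Complex.normSq α : ℂ) := by
      rw [← hprod, ← hconj, Complex.mul_conj]
    rw [this]
    simp
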